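/- Let (P_t)_{t∈ℕ} be a Rota–Baxter family of endomorphisms of a commutative algebra B, i.e. P_s(a)·P_t(b) = P_{s+t}(P_s(a)·b + a·P_t(b) − a·b) for all s,t ∈ ℕ and a,b ∈ B. Let H be a graded connected commutative bialgebra and φ : H → B a character. Define φ_-(x) = −P_{|x|}(φ̄(x)) for homogeneous x of positive degree |x|, where φ̄(x) = φ(x) + ∑_{(x)} φ_-(x')φ(x'') (sum over the reduced coproduct), and φ_-(1) = 1. Then φ_- is a character: φ_-(xy) = φ_-(x)φ_-(y) for homogeneous x, y of positive degree. -/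

import Mathlib

/- STATEMENT 9: Rota–Baxter family version. If `(P_t)_{t∈ℕ}` is a Rota–Baxter family
on a commutative algebra `B`, `H` a graded connected commutative bialgebra, `φ` a
character, and `φ₋` is defined by `φ₋(1) = 1` and
`φ₋(x) = −P_{|x|}(φ(x) + ∑ φ₋(x')φ(x'')) = −P_{|x|}((φ₋*φ)(x) − φ₋(x))` for
homogeneous `x` of positive degree, then `φ₋` is a character:
`φ₋(xy) = φ₋(x)φ₋(y)` for homogeneous `x, y` of positive degree. -/

variable {R H B : Type*} [Field R] [CommRing H] [Bialgebra R H]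
  [CommRing B] [Algebra R B]

noncomputable def conv (f g : H →ₗ[R] B) : H →ₗ[R] B :=
  (LinearMap.mul' R B).comp ((TensorProduct.map f g).comp
    (Coalgebra.comul : H →ₗ[R] TensorProduct R H H))

def IsCharacter (f : H →ₗ[R] B) : Prop :=
  f 1 = 1 ∧ ∀ x y : H, f (x * y) = f x * f y

def Connected (ℬ : ℕ → Submodule R H) : Prop :=
  ℬ 0 ≤ Submodule.span R {(1 : H)}

def ComulGraded (ℬ : ℕ → Submodule R H) : Prop :=
  ∀ n : ℕ, ∀ x ∈ ℬ n, (Coalgebra.comul (R := R) x : TensorProduct R H H) ∈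
    ⨆ (p : ℕ × ℕ) (_ : p.1 + p.2 = n),
      LinearMap.range (TensorProduct.map (ℬ p.1).subtype (ℬ p.2).subtype)

/-! ### Auxiliary definitions and lemmas -/

/-- `mul' ∘ (f ⊗ g)` on the tensor square. -/
noncomputable def tPhi (f g : H →ₗ[R] B) : TensorProduct R H H →ₗ[R] B :=
  (LinearMap.mul' R B).comp (TensorProduct.map f g)

lemma tPhi_tmul (f g : H →ₗ[R] B) (a b : H) :
    tPhi f g (a ⊗ₜ[R] b) = f a * g b := by
  simp [tPhi]

lemma tPhi_comul (f g : H →ₗ[R] B) (z : H) :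
    tPhi f g (Coalgebra.comul (R := R) z) = conv f g z := rfl

/-- The counit, composed with the algebra map into `B`. -/
noncomputable def ceps : H →ₗ[R] B :=
  (Algebra.linearMap R B).comp (Coalgebra.counit)

lemma ceps_one : ceps (R := R) (H := H) (B := B) 1 = 1 := by
  simp [ceps]

lemma ceps_mul (x y : H) : ceps (R := R) (B := B) (x * y)
    = ceps (R := R) (B := B) x * ceps (R := R) (B := B) y := by
  simp [ceps]

lemma tPhi_ceps_comul (f : H →ₗ[R] B) (z : H) :
    tPhi f (ceps : H →ₗ[R] B) (Coalgebra.comul (R := R) z) = f z := by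
  have h : (TensorProduct.map f (ceps : H →ₗ[R] B)) =
      (TensorProduct.map f (Algebra.linearMap R B)).comp
        (LinearMap.lTensor H (Coalgebra.counit (R := R))) := by
    ext a b
    simp [ceps]
  rw [tPhi, LinearMap.comp_apply, h, LinearMap.comp_apply,
    Coalgebra.lTensor_counit_comul]
  simp

/-- The key tensor-level identity. -/
lemma key_tensor (ℬ : ℕ → Submodule R H) (hconn : Connected ℬ)
    (φ φm : H →ₗ[R] B) (hφ : IsCharacter φ) (hφm1 : φm 1 = 1)
    (m n : ℕ)
    (IH : ∀ p q : ℕ, 0 < p → 0 < q → p + q < m + n →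
      ∀ a ∈ ℬ p, ∀ c ∈ ℬ q, φm (a * c) = φm a * φm c)
    {u v : TensorProduct R H H}
    (hu : u ∈ ⨆ (p : ℕ × ℕ) (_ : p.1 + p.2 = m),
      LinearMap.range (TensorProduct.map (ℬ p.1).subtype (ℬ p.2).subtype))
    (hv : v ∈ ⨆ (p : ℕ × ℕ) (_ : p.1 + p.2 = n),
      LinearMap.range (TensorProduct.map (ℬ p.1).subtype (ℬ p.2).subtype)) :
    tPhi φm φ (u * v) - tPhi φm φ u * tPhi φm φ v
      = tPhi φm (ceps : H →ₗ[R] B) (u * v)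
        - tPhi φm ceps u * tPhi φm ceps v := by
  classical
  set Φ : TensorProduct R H H →ₗ[R] B := tPhi φm φ with hΦ
  set K : TensorProduct R H H →ₗ[R] B := tPhi φm (ceps : H →ₗ[R] B) with hK
  have Q0l : ∀ w : TensorProduct R H H,
      Φ (0 * w) - Φ 0 * Φ w = K (0 * w) - K 0 * K w := by
    intro w; simp
  have Q0r : ∀ w : TensorProduct R H H,
      Φ (w * 0) - Φ w * Φ 0 = K (w * 0) - K w * K 0 := by
    intro w; simp
  have Qal : ∀ w1 w2 w : TensorProduct R H H,
      (Φ (w1 * w) - Φ w1 * Φ w = K (w1 * w) - K w1 * K w) →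
      (Φ (w2 * w) - Φ w2 * Φ w = K (w2 * w) - K w2 * K w) →
      (Φ ((w1 + w2) * w) - Φ (w1 + w2) * Φ w
        = K ((w1 + w2) * w) - K (w1 + w2) * K w) := by
    intro w1 w2 w h1 h2
    simp only [add_mul, map_add]
    linear_combination h1 + h2
  have Qar : ∀ w w1 w2 : TensorProduct R H H,
      (Φ (w * w1) - Φ w * Φ w1 = K (w * w1) - K w * K w1) →
      (Φ (w * w2) - Φ w * Φ w2 = K (w * w2) - K w * K w2) →
      (Φ (w * (w1 + w2)) - Φ w * Φ (w1 + w2)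
        = K (w * (w1 + w2)) - K w * K (w1 + w2)) := by
    intro w w1 w2 h1 h2
    simp only [mul_add, map_add]
    linear_combination h1 + h2
  revert hv
  refine Submodule.iSup_induction (x := u)
    (p := fun p : ℕ × ℕ => ⨆ (_ : p.1 + p.2 = m),
      LinearMap.range (TensorProduct.map (ℬ p.1).subtype (ℬ p.2).subtype))
    (motive := fun w => v ∈ (⨆ (p : ℕ × ℕ) (_ : p.1 + p.2 = n),
        LinearMap.range (TensorProduct.map (ℬ p.1).subtype (ℬ p.2).subtype)) →
      Φ (w * v) - Φ w * Φ v = K (w * v) - K w * K v)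
    hu ?_ (fun _ => Q0l v) (fun w1 w2 h1 h2 hv => Qal w1 w2 v (h1 hv) (h2 hv))
  intro p w hw hv
  beta_reduce at hw
  by_cases hpm : p.1 + p.2 = m
  · rw [iSup_pos hpm] at hw
    obtain ⟨s, rfl⟩ := hw
    induction s using TensorProduct.induction_on with
    | zero => simpa using Q0l v
    | add s1 s2 h1 h2 =>
      rw [map_add]; exact Qal _ _ v h1 h2
    | tmul a b =>
      rw [TensorProduct.map_tmul]
      refine Submodule.iSup_induction (x := v)
        (p := fun q : ℕ × ℕ => ⨆ (_ : q.1 + q.2 = n),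
          LinearMap.range (TensorProduct.map (ℬ q.1).subtype (ℬ q.2).subtype))
        (motive := fun w => Φ (((a : H) ⊗ₜ[R] (b : H)) * w)
            - Φ ((a : H) ⊗ₜ[R] (b : H)) * Φ w
          = K (((a : H) ⊗ₜ[R] (b : H)) * w)
            - K ((a : H) ⊗ₜ[R] (b : H)) * K w)
        hv ?_ (Q0r _) (fun w1 w2 g1 g2 => Qar _ w1 w2 g1 g2)
      intro q w' hw'
      beta_reduce at hw'
      by_cases hqn : q.1 + q.2 = n
      · rw [iSup_pos hqn] at hw'
        obtain ⟨t, rfl⟩ := hw'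
        induction t using TensorProduct.induction_on with
        | zero => simpa using Q0r _
        | add t1 t2 g1 g2 =>
          rw [map_add]; exact Qar _ _ _ g1 g2
        | tmul c d =>
          rw [TensorProduct.map_tmul, Algebra.TensorProduct.tmul_mul_tmul]
          simp only [hΦ, hK, tPhi_tmul, Submodule.subtype_apply]
          rw [hφ.2, ceps_mul]
          rcases Nat.eq_zero_or_pos p.1 with hp0 | hp1
          · have ha0 : (a : H) ∈ ℬ 0 := by rw [← hp0]; exact a.2
            obtain ⟨α, hα⟩ := Submodule.mem_span_singleton.mp (hconn ha0)
            have hac : φm ((a : H) * (c : H)) = φm (a : H) * φm (c : H) := by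
              rw [← hα]
              simp [smul_mul_assoc, hφm1]
            rw [hac]; ring
          · rcases Nat.eq_zero_or_pos q.1 with hq0 | hq1
            · have hc0 : (c : H) ∈ ℬ 0 := by rw [← hq0]; exact c.2
              obtain ⟨γ, hγ⟩ := Submodule.mem_span_singleton.mp (hconn hc0)
              have hac : φm ((a : H) * (c : H)) = φm (a : H) * φm (c : H) := by
                rw [← hγ]
                simp [mul_smul_comm, hφm1]
              rw [hac]; ring
            · by_cases hlt : p.1 + q.1 < m + n
              · rw [IH p.1 q.1 hp1 hq1 hlt (a : H) a.2 (c : H) c.2]; ring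
              · have hp2 : p.2 = 0 := by omega
                have hq2 : q.2 = 0 := by omega
                have hb0 : (b : H) ∈ ℬ 0 := by rw [← hp2]; exact b.2
                have hd0 : (d : H) ∈ ℬ 0 := by rw [← hq2]; exact d.2
                obtain ⟨β, hβ⟩ := Submodule.mem_span_singleton.mp (hconn hb0)
                obtain ⟨δ, hδ⟩ := Submodule.mem_span_singleton.mp (hconn hd0)
                have hb : φ (b : H) = (ceps : H →ₗ[R] B) (b : H) := by
                  rw [← hβ]; simp [hφ.1, ceps_one]
                have hd : φ (d : H) = (ceps : H →ₗ[R] B) (d : H) := by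
                  rw [← hδ]; simp [hφ.1, ceps_one]
                rw [hb, hd]
      · rw [iSup_neg hqn, Submodule.mem_bot] at hw'
        subst hw'
        exact Q0r _
  · rw [iSup_neg hpm, Submodule.mem_bot] at hw
    subst hw
    exact Q0l v

theorem counterterm_isCharacter_rotaBaxterFamily
    (ℬ : ℕ → Submodule R H) [GradedAlgebra ℬ]
    (hconn : Connected ℬ) (hgr : ComulGraded ℬ)
    (P : ℕ → B →ₗ[R] B)
    -- the Rota–Baxter family identity
    (hRBF : ∀ (s t : ℕ) (a b : B),
      P s a * P t b = P (s + t) (P s a * b + a * P t b - a * b))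
    (φ φm : H →ₗ[R] B) (hφ : IsCharacter φ)
    (hφm1 : φm 1 = 1)
    -- the recursive definition φ₋(x) = −P_{|x|}(φ̄(x)) on homogeneous positive degrees
    (hrec : ∀ n : ℕ, 0 < n → ∀ x ∈ ℬ n,
      φm x = - P n ((conv φm φ) x - φm x)) :
    ∀ (m n : ℕ), 0 < m → 0 < n → ∀ x ∈ ℬ m, ∀ y ∈ ℬ n,
      φm (x * y) = φm x * φm y := by
  suffices h : ∀ N m n : ℕ, m + n = N → 0 < m → 0 < n →
      ∀ x ∈ ℬ m, ∀ y ∈ ℬ n, φm (x * y) = φm x * φm y by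
    intro m n hm hn
    exact h (m + n) m n rfl hm hn
  intro N
  induction N using Nat.strong_induction_on with
  | _ N IHN =>
    intro m n hmn hm hn x hx y hy
    have IH : ∀ p q : ℕ, 0 < p → 0 < q → p + q < m + n →
        ∀ a ∈ ℬ p, ∀ c ∈ ℬ q, φm (a * c) = φm a * φm c := by
      intro p q hp hq hlt
      exact IHN (p + q) (by omega) p q rfl hp hq
    have hxy : x * y ∈ ℬ (m + n) := SetLike.mul_mem_graded hx hy
    have hK := key_tensor ℬ hconn φ φm hφ hφm1 m n IH (hgr m x hx) (hgr n y hy)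
    rw [← Bialgebra.comul_mul, tPhi_comul, tPhi_comul, tPhi_comul,
      tPhi_ceps_comul, tPhi_ceps_comul, tPhi_ceps_comul] at hK
    -- hK : conv φm φ (x*y) - conv φm φ x * conv φm φ y = φm (x*y) - φm x * φm y
    have hx' := hrec m hm x hx
    have hy' := hrec n hn y hy
    have hxy' := hrec (m + n) (by omega) (x * y) hxy
    set ux := conv φm φ x - φm x with hux
    set uy := conv φm φ y - φm y with huy
    have h1 : φm x * φm y = P m ux * P n uy := by rw [hx', hy']; ring
    rw [h1, hRBF m n ux uy]
    have hPm : P m ux = - φm x := by rw [hx', neg_neg]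
    have hPn : P n uy = - φm y := by rw [hy', neg_neg]
    rw [hPm, hPn, hxy']
    have e2 : conv φm φ (x * y) - φm (x * y)
        = conv φm φ x * conv φm φ y - φm x * φm y := by
      linear_combination hK
    rw [e2]
    have e3 : -φm x * uy + ux * -φm y - ux * uy
        = -(conv φm φ x * conv φm φ y - φm x * φm y) := by
      rw [hux, huy]; ring
    rw [e3, map_neg]
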